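/- arXiv:2110.11531 — 2 statements merged into one kernel-verified Lean document; each statement's English description precedes it below -/
import Mathlib

section
/- Let 0 < θ ≤ 1 and λ > 0. Then for every s > λ^{1/θ}, the function t ↦ E_θ(−λ t^θ) is integrable against e^{−st} on (0,∞) and its Laplace transform is ∫_0^∞ e^{−st} E_θ(−λ t^θ) dt = s^{θ−1}/(s^θ + λ). -/
open MeasureTheory

/-- The (one-parameter) Mittag-Leffler function `E_θ(z) = Σ_{ℓ=0}^∞ z^ℓ / Γ(θℓ + 1)`. -/
noncomputable def mittagLeffler (θ z : ℝ) : ℝ :=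
  ∑' ℓ : ℕ, z ^ ℓ / Real.Gamma (θ * ℓ + 1)

lemma gamma_ratio {θ : ℝ} (hθ0 : 0 < θ) (hθ1 : θ < 1) {x : ℝ} (hx : 1 ≤ x) :
    Real.Gamma x * x ≤ Real.Gamma (x + θ) * (x + θ) ^ (1 - θ) := by
  have hx0 : 0 < x := lt_of_lt_of_le one_pos hx
  have hxθ : 0 < x + θ := by linarith
  have hG : 0 < Real.Gamma (x + θ) := Real.Gamma_pos_of_pos hxθ
  have h := Real.Gamma_mul_add_mul_le_rpow_Gamma_mul_rpow_Gamma (s := x + θ) (t := x + θ + 1)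
    (a := θ) (b := 1 - θ) hxθ (by linarith) hθ0 (by linarith) (by ring)
  have e1 : θ * (x + θ) + (1 - θ) * (x + θ + 1) = x + 1 := by ring
  rw [e1] at h
  rw [Real.Gamma_add_one (ne_of_gt hx0)] at h
  rw [show x + θ + 1 = (x + θ) + 1 by ring, Real.Gamma_add_one (ne_of_gt hxθ)] at h
  calc Real.Gamma x * x = x * Real.Gamma x := mul_comm _ _
    _ ≤ Real.Gamma (x + θ) ^ θ * ((x + θ) * Real.Gamma (x + θ)) ^ (1 - θ) := h
    _ = Real.Gamma (x + θ) * (x + θ) ^ (1 - θ) := by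
        rw [Real.mul_rpow hxθ.le hG.le]
        rw [show Real.Gamma (x+θ) ^ θ * ((x+θ) ^ (1-θ) * Real.Gamma (x+θ) ^ (1-θ))
          = (Real.Gamma (x+θ) ^ θ * Real.Gamma (x+θ) ^ (1-θ)) * (x+θ) ^ (1-θ) by ring]
        rw [← Real.rpow_add hG]
        norm_num

lemma summable_ML {θ : ℝ} (hθ0 : 0 < θ) (hθ1 : θ ≤ 1) (z : ℝ) :
    Summable fun ℓ : ℕ => z ^ ℓ / Real.Gamma (θ * ℓ + 1) := by
  rcases eq_or_lt_of_le hθ1 with h1 | h1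
  · subst h1
    refine (Real.summable_pow_div_factorial z).congr fun ℓ => ?_
    rw [one_mul, Real.Gamma_nat_eq_factorial]
  · apply summable_of_ratio_norm_eventually_le (r := 1/2) (by norm_num)
    have hev : ∀ᶠ ℓ : ℕ in Filter.atTop, (4 * |z| + 1) ^ (1/θ) * 2 ≤ θ * ℓ + 1 := by
      have := (tendsto_natCast_atTop_atTop (R := ℝ)).const_mul_atTop hθ0
      exact (Filter.tendsto_atTop_add_const_right Filter.atTop 1 this).eventually_ge_atTop _
    filter_upwards [hev] with ℓ hℓ
    set x : ℝ := θ * ℓ + 1 with hxdef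
    have hx1 : (1:ℝ) ≤ x := by
      have : (0:ℝ) ≤ θ * ℓ := by positivity
      simp only [hxdef]; linarith
    have hx0 : (0:ℝ) < x := by linarith
    have hxθ : (0:ℝ) < x + θ := by linarith
    have hGx : 0 < Real.Gamma x := Real.Gamma_pos_of_pos hx0
    have hGxθ : 0 < Real.Gamma (x + θ) := Real.Gamma_pos_of_pos hxθ
    have key : Real.Gamma x * x ≤ Real.Gamma (x + θ) * (x + θ) ^ (1 - θ) :=
      gamma_ratio hθ0 h1 hx1
    have hb0 : (0:ℝ) ≤ 4 * |z| + 1 := by positivity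
    have hx2 : (4 * |z| + 1) ^ (1/θ) ≤ x / 2 := by linarith
    have hpow : 4 * |z| + 1 ≤ (x/2) ^ θ := by
      have h := Real.rpow_le_rpow (Real.rpow_nonneg hb0 _) hx2 hθ0.le
      rwa [← Real.rpow_mul hb0, one_div_mul_cancel (ne_of_gt hθ0), Real.rpow_one] at h
    have hRR' : (x/2) ^ θ ≤ x ^ θ :=
      Real.rpow_le_rpow (by linarith) (by linarith) hθ0.le
    have hxθle : (x + θ) ^ (1-θ) ≤ 2 * x ^ (1-θ) := by
      have h1' : x + θ ≤ 2 * x := by linarith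
      have h2 := Real.rpow_le_rpow hxθ.le h1' (by linarith : (0:ℝ) ≤ 1 - θ)
      rw [Real.mul_rpow (by norm_num) hx0.le] at h2
      refine h2.trans ?_
      have h2le : (2:ℝ) ^ (1-θ) ≤ 2 ^ (1:ℝ) :=
        Real.rpow_le_rpow_of_exponent_le (by norm_num) (by linarith)
      rw [Real.rpow_one] at h2le
      exact mul_le_mul_of_nonneg_right h2le (Real.rpow_nonneg hx0.le _)
    have hQR : x ^ θ * x ^ (1-θ) = x := by
      rw [← Real.rpow_add hx0]; norm_num
    have hQpos : (0:ℝ) < x ^ (1-θ) := Real.rpow_pos_of_pos hx0 _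
    have hRpos : (0:ℝ) < x ^ θ := Real.rpow_pos_of_pos hx0 _
    -- conclude 2 |z| Γ(x) ≤ Γ(x+θ)
    have hmain : 2 * |z| * Real.Gamma x ≤ Real.Gamma (x + θ) := by
      have h3 : Real.Gamma x * x ≤ 2 * (Real.Gamma (x+θ) * x ^ (1-θ)) := by
        calc Real.Gamma x * x ≤ Real.Gamma (x + θ) * (x + θ) ^ (1 - θ) := key
          _ ≤ Real.Gamma (x+θ) * (2 * x ^ (1-θ)) :=
              mul_le_mul_of_nonneg_left hxθle hGxθ.le
          _ = 2 * (Real.Gamma (x+θ) * x ^ (1-θ)) := by ring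
      have h4 : Real.Gamma x * x ^ θ * x ≤ 2 * Real.Gamma (x+θ) * x := by
        have := mul_le_mul_of_nonneg_right h3 hRpos.le
        calc Real.Gamma x * x ^ θ * x = Real.Gamma x * x * x ^ θ := by ring
          _ ≤ 2 * (Real.Gamma (x+θ) * x ^ (1-θ)) * x ^ θ := this
          _ = 2 * Real.Gamma (x+θ) * (x ^ θ * x ^ (1-θ)) := by ring
          _ = 2 * Real.Gamma (x+θ) * x := by rw [hQR]
      have h5 : Real.Gamma x * x ^ θ ≤ 2 * Real.Gamma (x+θ) :=
        le_of_mul_le_mul_right h4 hx0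
      nlinarith [mul_le_mul_of_nonneg_left (hpow.trans hRR') hGx.le]
    -- finish ratio bound
    have hxsucc : θ * ((ℓ:ℕ)+1 : ℕ) + 1 = x + θ := by push_cast; ring
    rw [hxsucc]
    rw [Real.norm_eq_abs, Real.norm_eq_abs, abs_div, abs_div, abs_pow, abs_pow,
      abs_of_pos hGxθ, abs_of_pos hGx]
    rw [show (1:ℝ)/2 * (|z| ^ ℓ / Real.Gamma x) = (1/2 * |z| ^ ℓ)/Real.Gamma x by ring]
    rw [div_le_div_iff₀ hGxθ hGx]
    calc |z| ^ (ℓ+1) * Real.Gamma x = |z| ^ ℓ * (|z| * Real.Gamma x) := by ring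
      _ ≤ |z| ^ ℓ * ((1/2) * Real.Gamma (x+θ)) := by
          apply mul_le_mul_of_nonneg_left _ (pow_nonneg (abs_nonneg z) ℓ)
          linarith
      _ = 1/2 * |z| ^ ℓ * Real.Gamma (x+θ) := by ring

lemma central {θ s : ℝ} (hθ0 : 0 < θ) (hs : 0 < s) (c : ℝ) (ℓ : ℕ) :
    IntegrableOn (fun t : ℝ => Real.exp (-(s*t)) * ((c * t ^ θ) ^ ℓ / Real.Gamma (θ*ℓ+1)))
      (Set.Ioi 0) ∧
    ∫ t in Set.Ioi (0:ℝ), Real.exp (-(s*t)) * ((c * t ^ θ) ^ ℓ / Real.Gamma (θ*ℓ+1))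
      = (1/s) * (c * (1/s) ^ θ) ^ ℓ := by
  set a : ℝ := θ * ℓ + 1 with hadef
  have hθℓ : (0:ℝ) ≤ θ * ℓ := by positivity
  have ha : 0 < a := by simp only [hadef]; linarith
  have hGa : 0 < Real.Gamma a := Real.Gamma_pos_of_pos ha
  have heq : Set.EqOn (fun t : ℝ => Real.exp (-(s*t)) * ((c * t ^ θ) ^ ℓ / Real.Gamma a))
      (fun t : ℝ => (c ^ ℓ / Real.Gamma a) * (t ^ (a-1) * Real.exp (-(s*t)))) (Set.Ioi 0) := by
    intro t ht
    have ht0 : (0:ℝ) < t := ht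
    have h1 : (t ^ θ) ^ ℓ = t ^ (θ * ℓ) := by
      rw [← Real.rpow_natCast (t ^ θ) ℓ, ← Real.rpow_mul ht0.le]
    have h2 : a - 1 = θ * ℓ := by simp [hadef]
    simp only [mul_pow, h1, h2]
    ring
  have hint : IntegrableOn (fun t : ℝ => t ^ (a-1) * Real.exp (-(s*t))) (Set.Ioi 0) := by
    have := integrableOn_rpow_mul_exp_neg_mul_rpow (p := 1) (s := θ * ℓ) (b := s)
      (by linarith) one_pos hs
    have h2 : a - 1 = θ * ℓ := by simp [hadef]
    rw [h2]
    refine this.congr_fun (fun x hx => ?_) measurableSet_Ioi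
    beta_reduce
    rw [Real.rpow_one, neg_mul]
  constructor
  · exact IntegrableOn.congr_fun (hint.const_mul (c ^ ℓ / Real.Gamma a)) heq.symm measurableSet_Ioi
  · rw [setIntegral_congr_fun measurableSet_Ioi heq, MeasureTheory.integral_const_mul,
      Real.integral_rpow_mul_exp_neg_mul_Ioi ha hs]
    have h3 : (1/s : ℝ) ^ a = ((1/s) ^ θ) ^ ℓ * (1/s) := by
      have hs' : (0:ℝ) < 1/s := by positivity
      rw [hadef, Real.rpow_add hs', Real.rpow_one, ← Real.rpow_natCast ((1/s) ^ θ) ℓ,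
        ← Real.rpow_mul hs'.le]
    rw [h3]
    field_simp
    ring

/-- For `0 < θ ≤ 1`, `λ > 0` and `s > λ^{1/θ}`, the function `t ↦ E_θ(−λ t^θ)` is
Laplace-integrable and `∫_0^∞ e^{−st} E_θ(−λ t^θ) dt = s^{θ−1}/(s^θ + λ)`. -/
theorem laplace_mittagLeffler (θ lam : ℝ) (hθ0 : 0 < θ) (hθ1 : θ ≤ 1) (hlam : 0 < lam)
    (s : ℝ) (hs : lam ^ (1 / θ) < s) :
    IntegrableOn (fun t : ℝ => Real.exp (-(s * t)) * mittagLeffler θ (-(lam * t ^ θ)))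
      (Set.Ioi 0) ∧
    (∫ t in Set.Ioi (0 : ℝ), Real.exp (-(s * t)) * mittagLeffler θ (-(lam * t ^ θ))) =
      s ^ (θ - 1) / (s ^ θ + lam) := by
  have hs0 : 0 < s := lt_trans (Real.rpow_pos_of_pos hlam _) hs
  have hsθpos : 0 < s ^ θ := Real.rpow_pos_of_pos hs0 θ
  have hlamlt : lam < s ^ θ := by
    have h := Real.rpow_lt_rpow (Real.rpow_nonneg hlam.le _) hs hθ0
    rwa [← Real.rpow_mul hlam.le, one_div_mul_cancel hθ0.ne', Real.rpow_one] at h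
  have hinv : (1/s : ℝ) ^ θ = (s ^ θ)⁻¹ := by rw [one_div, Real.inv_rpow hs0.le]
  set r : ℝ := lam * (1/s) ^ θ with hrdef
  have hr0 : 0 ≤ r := by positivity
  have hr1 : r < 1 := by
    rw [hrdef, hinv, mul_comm, inv_mul_lt_one₀ hsθpos]
    exact hlamlt
  set F : ℕ → ℝ → ℝ := fun ℓ t =>
    Real.exp (-(s*t)) * ((-(lam * t ^ θ)) ^ ℓ / Real.Gamma (θ * ℓ + 1)) with hFdef
  have hFc : ∀ ℓ : ℕ, F ℓ = fun t : ℝ =>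
      Real.exp (-(s*t)) * (((-lam) * t ^ θ) ^ ℓ / Real.Gamma (θ * ℓ + 1)) := by
    intro ℓ; funext t; simp only [hFdef, neg_mul]
  have hF_int : ∀ ℓ : ℕ, IntegrableOn (F ℓ) (Set.Ioi 0) := by
    intro ℓ; rw [hFc]; exact (central hθ0 hs0 (-lam) ℓ).1
  have hF_val : ∀ ℓ : ℕ, (∫ t in Set.Ioi (0:ℝ), F ℓ t) = (1/s) * (-r) ^ ℓ := by
    intro ℓ
    rw [hFc, (central hθ0 hs0 (-lam) ℓ).2]
    congr 1
    rw [hrdef, neg_mul]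
  have hnorm : ∀ ℓ : ℕ, Set.EqOn (fun t : ℝ => ‖F ℓ t‖)
      (fun t : ℝ => Real.exp (-(s*t)) * ((lam * t ^ θ) ^ ℓ / Real.Gamma (θ * ℓ + 1)))
      (Set.Ioi 0) := by
    intro ℓ t ht
    have ht0 : (0:ℝ) < t := ht
    have hG : 0 < Real.Gamma (θ * ℓ + 1) := by
      have : (0:ℝ) ≤ θ * ℓ := by positivity
      exact Real.Gamma_pos_of_pos (by linarith)
    have htθ : 0 ≤ lam * t ^ θ := by
      have := Real.rpow_nonneg ht0.le θ
      positivity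
    simp only [hFdef, Real.norm_eq_abs, abs_mul, abs_div, abs_pow, abs_neg,
      abs_of_pos hG, Real.abs_exp, abs_of_nonneg htθ]
  have hGval : ∀ ℓ : ℕ, (∫ t in Set.Ioi (0:ℝ), ‖F ℓ t‖) = (1/s) * r ^ ℓ := by
    intro ℓ
    rw [setIntegral_congr_fun measurableSet_Ioi (hnorm ℓ), (central hθ0 hs0 lam ℓ).2]
  have hF_sum : Summable fun ℓ : ℕ => ∫ t in Set.Ioi (0:ℝ), ‖F ℓ t‖ :=
    (((summable_geometric_of_lt_one hr0 hr1).mul_left (1/s))).congr fun ℓ => (hGval ℓ).symm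
  have hpt : ∀ t : ℝ, (∑' ℓ : ℕ, F ℓ t) =
      Real.exp (-(s*t)) * mittagLeffler θ (-(lam * t ^ θ)) := by
    intro t
    simp only [hFdef, mittagLeffler]
    exact tsum_mul_left
  have hsummable_norm : ∀ t : ℝ, Summable fun ℓ : ℕ => ‖F ℓ t‖ := by
    intro t
    have h := (summable_ML hθ0 hθ1 |(-(lam * t ^ θ))|).mul_left (Real.exp (-(s*t)))
    refine h.congr fun ℓ => ?_
    have hG : 0 < Real.Gamma (θ * ℓ + 1) := by
      have : (0:ℝ) ≤ θ * ℓ := by positivity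
      exact Real.Gamma_pos_of_pos (by linarith)
    simp [hFdef, Real.norm_eq_abs, abs_mul, abs_div, abs_pow, abs_of_pos hG, Real.abs_exp,
      mul_div_assoc]
  have hmeas : Measurable fun t : ℝ => Real.exp (-(s*t)) * mittagLeffler θ (-(lam * t ^ θ)) := by
    have h1 : Measurable fun t : ℝ => Real.exp (-(s*t)) := by fun_prop
    have h2 : Measurable fun t : ℝ => mittagLeffler θ (-(lam * t ^ θ)) := by
      apply measurable_of_tendsto_metrizable
        (f := fun n t => ∑ ℓ ∈ Finset.range n, (-(lam * t ^ θ)) ^ ℓ / Real.Gamma (θ * ℓ + 1))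
      · intro n
        apply Finset.measurable_sum
        intro ℓ _
        fun_prop
      · rw [tendsto_pi_nhds]
        intro t
        exact (summable_ML hθ0 hθ1 (-(lam * t ^ θ))).hasSum.tendsto_sum_nat
    exact h1.mul h2
  constructor
  · refine ⟨hmeas.aestronglyMeasurable, ?_⟩
    rw [MeasureTheory.hasFiniteIntegral_iff_norm]
    calc (∫⁻ t in Set.Ioi (0:ℝ),
          ENNReal.ofReal ‖Real.exp (-(s*t)) * mittagLeffler θ (-(lam * t ^ θ))‖)
        ≤ ∫⁻ t in Set.Ioi (0:ℝ), ∑' ℓ : ℕ, (‖F ℓ t‖₊ : ENNReal) := by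
          apply MeasureTheory.lintegral_mono
          intro t
          dsimp only
          rw [← hpt t]
          calc ENNReal.ofReal ‖∑' ℓ : ℕ, F ℓ t‖
              ≤ ENNReal.ofReal (∑' ℓ : ℕ, ‖F ℓ t‖) :=
                ENNReal.ofReal_le_ofReal (norm_tsum_le_tsum_norm (hsummable_norm t))
            _ = ∑' ℓ : ℕ, ENNReal.ofReal ‖F ℓ t‖ :=
                ENNReal.ofReal_tsum_of_nonneg (fun ℓ => norm_nonneg _) (hsummable_norm t)
            _ = ∑' ℓ : ℕ, (‖F ℓ t‖₊ : ENNReal) :=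
                tsum_congr fun ℓ => ofReal_norm (F ℓ t)
      _ = ∑' ℓ : ℕ, ∫⁻ t in Set.Ioi (0:ℝ), (‖F ℓ t‖₊ : ENNReal) :=
          MeasureTheory.lintegral_tsum fun ℓ => (hF_int ℓ).aestronglyMeasurable.enorm
      _ = ∑' ℓ : ℕ, ENNReal.ofReal ((1/s) * r ^ ℓ) := by
          refine tsum_congr fun ℓ => ?_
          change ∫⁻ t in Set.Ioi (0:ℝ), ‖F ℓ t‖ₑ = _
          rw [← MeasureTheory.ofReal_integral_norm_eq_lintegral_enorm (hF_int ℓ), hGval ℓ]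
      _ = ENNReal.ofReal (∑' ℓ : ℕ, (1/s) * r ^ ℓ) :=
          (ENNReal.ofReal_tsum_of_nonneg (fun ℓ => by positivity)
            ((summable_geometric_of_lt_one hr0 hr1).mul_left (1/s))).symm
      _ < ⊤ := ENNReal.ofReal_lt_top
  · have hinterchange := MeasureTheory.integral_tsum_of_summable_integral_norm hF_int hF_sum
    have : (∫ t in Set.Ioi (0:ℝ), Real.exp (-(s*t)) * mittagLeffler θ (-(lam * t ^ θ)))
        = ∑' ℓ : ℕ, ∫ t in Set.Ioi (0:ℝ), F ℓ t := by
      rw [hinterchange]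
      exact setIntegral_congr_fun measurableSet_Ioi (fun t _ => (hpt t).symm)
    rw [this]
    have hgeo : (∑' ℓ : ℕ, (-r) ^ ℓ) = (1 - (-r))⁻¹ := by
      apply tsum_geometric_of_norm_lt_one
      rw [norm_neg, Real.norm_eq_abs, abs_of_nonneg hr0]
      exact hr1
    calc (∑' ℓ : ℕ, ∫ t in Set.Ioi (0:ℝ), F ℓ t) = ∑' ℓ : ℕ, (1/s) * (-r) ^ ℓ :=
        tsum_congr hF_val
      _ = (1/s) * (1 - (-r))⁻¹ := by rw [tsum_mul_left, hgeo]
      _ = s ^ (θ - 1) / (s ^ θ + lam) := by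
          rw [hrdef, hinv, sub_neg_eq_add, Real.rpow_sub hs0, Real.rpow_one]
          have h1 : s ^ θ + lam > 0 := by positivity
          field_simp
end

section
/- Let ψ, φ : ℝ → ℝ be nonnegative integrable probability densities with ∫ψ = ∫φ = 1 and ψ(t) = 0 for t < 0, and define the survival probability Ψ(t) = 1 − ∫_0^t ψ(r) dr. Let u₀ : ℝ → ℝ be integrable, and let u : ℝ × [0,∞) → ℝ be measurable such that for every s > 0 the function (x,t) ↦ e^{−st}|u(x,t)| is integrable on ℝ × (0,∞), and suppose u satisfies the CTRW master equation u(x,t) = Ψ(t) u₀(x) + ∫_0^t ψ(t−τ) ∫_ℝ φ(y) u(x−y, τ) dy dτ for almost every (x,t). Then the Fourier–Laplace transform Û(ξ,s) = ∫_0^∞ ∫_ℝ e^{−st} e^{−iξx} u(x,t) dx dt satisfies the Montroll–Weiss equation: for all s > 0 and ξ ∈ ℝ, Û(ξ,s) · (1 − 𝓛[ψ](s) · 𝓕[φ](ξ)) = ((1 − 𝓛[ψ](s))/s) · 𝓕[u₀](ξ). -/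
open MeasureTheory intervalIntegral Set

namespace MontrollWeissAux

lemma exp_hasDeriv (s : ℝ) (hs : s ≠ 0) (t : ℝ) :
    HasDerivAt (fun t : ℝ => -(1/s) * Real.exp (-(s*t))) (Real.exp (-(s*t))) t := by
  have h1 : HasDerivAt (fun t : ℝ => -(s*t)) (-s) t := by
    exact (((hasDerivAt_id t).const_mul s).neg).congr_deriv (by simp)
  have h2 := h1.exp.const_mul (-(1/s))
  refine h2.congr_deriv ?_
  rw [eq_comm, mul_comm (Real.exp _) (-s), ← mul_assoc, neg_mul_neg, one_div, inv_mul_cancel₀ hs, one_mul]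

lemma integral_exp_Ioc {s : ℝ} (hs : 0 < s) {r : ℝ} (hr : 0 ≤ r) :
    ∫ t in Ioc (0:ℝ) r, Real.exp (-(s*t)) = (1 - Real.exp (-(s*r)))/s := by
  rw [← intervalIntegral.integral_of_le hr,
    intervalIntegral.integral_eq_sub_of_hasDerivAt (fun t _ => exp_hasDeriv s hs.ne' t)
      ((Real.continuous_exp.comp (by continuity)).intervalIntegrable 0 r)]
  rw [mul_zero, neg_zero, Real.exp_zero]
  field_simp
  ring

variable {ψ : ℝ → ℝ}

lemma psi_Iic (hψneg : ∀ t : ℝ, t < 0 → ψ t = 0) :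
    ∫ t in Iic (0:ℝ), ψ t = 0 := by
  have h0 : ∀ᵐ t : ℝ ∂(volume.restrict (Iic (0:ℝ))), ψ t = 0 := by
    have : ∀ᵐ t : ℝ, t ≠ 0 := by
      rw [MeasureTheory.ae_iff]
      simpa using measure_singleton (0:ℝ)
    filter_upwards [ae_restrict_of_ae this, ae_restrict_mem measurableSet_Iic] with t ht ht'
    exact hψneg t (lt_of_le_of_ne ht' ht)
  exact integral_eq_zero_of_ae h0

lemma psi_Ioi (hψint : Integrable ψ) (hψ1 : (∫ t : ℝ, ψ t) = 1)
    (hψneg : ∀ t : ℝ, t < 0 → ψ t = 0) :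
    ∫ t in Ioi (0:ℝ), ψ t = 1 := by
  have h := integral_add_compl (measurableSet_Ioi (a := (0:ℝ))) hψint (f := ψ)
  rw [Set.compl_Ioi, psi_Iic hψneg] at h
  linarith [hψ1 ▸ h]

lemma surv_eq (hψint : Integrable ψ) (hψ1 : (∫ t : ℝ, ψ t) = 1)
    (hψneg : ∀ t : ℝ, t < 0 → ψ t = 0) {t : ℝ} (ht : 0 < t) :
    1 - ∫ r in (0:ℝ)..t, ψ r = ∫ r in Ioi t, ψ r := by
  rw [intervalIntegral.integral_of_le ht.le]
  have hsplit : (∫ r in Ioc (0:ℝ) t, ψ r) + ∫ r in Ioi t, ψ r = ∫ r in Ioi (0:ℝ), ψ r := by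
    rw [← setIntegral_union (Set.Ioc_disjoint_Ioi le_rfl) measurableSet_Ioi
      hψint.integrableOn hψint.integrableOn, Set.Ioc_union_Ioi_eq_Ioi ht.le]
  have h1 := psi_Ioi hψint hψ1 hψneg
  linarith

lemma exp_integrableOn_Ioi {s : ℝ} (hs : 0 < s) :
    IntegrableOn (fun t : ℝ => Real.exp (-(s*t))) (Ioi (0:ℝ)) := by
  simpa [neg_mul] using exp_neg_integrableOn_Ioi (0:ℝ) hs

lemma expPsi_integrable (hψ0 : ∀ t, 0 ≤ ψ t) (hψint : Integrable ψ) {s : ℝ} (hs : 0 < s) :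
    Integrable (fun t : ℝ => Real.exp (-(s*t)) * ψ t) (volume.restrict (Ioi (0:ℝ))) := by
  refine hψint.restrict.mono' (((Real.continuous_exp.comp (by continuity)).measurable
    ).aestronglyMeasurable.mul hψint.restrict.aestronglyMeasurable) ?_
  filter_upwards [ae_restrict_mem measurableSet_Ioi] with t ht
  rw [Real.norm_eq_abs, abs_mul, Real.abs_exp, abs_of_nonneg (hψ0 t)]
  calc Real.exp (-(s*t)) * ψ t ≤ 1 * ψ t := by
        gcongr
        · exact hψ0 t
        · exact Real.exp_le_one_iff.mpr (by nlinarith [le_of_lt (mem_Ioi.mp ht)])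
    _ = ψ t := one_mul _

lemma expPsi_integrable' (hψ0 : ∀ t, 0 ≤ ψ t) (hψint : Integrable ψ)
    (hψneg : ∀ t : ℝ, t < 0 → ψ t = 0) {s : ℝ} (hs : 0 < s) :
    Integrable (fun t : ℝ => Real.exp (-(s*t)) * ψ t) volume := by
  refine hψint.mono' (((Real.continuous_exp.comp (by continuity)).measurable
    ).aestronglyMeasurable.mul hψint.aestronglyMeasurable)
    (Filter.Eventually.of_forall fun t => ?_)
  rw [Real.norm_eq_abs, abs_mul, Real.abs_exp, abs_of_nonneg (hψ0 t)]
  rcases lt_or_ge t 0 with ht | ht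
  · simp [hψneg t ht]
  · have h1 : Real.exp (-(s*t)) ≤ 1 := Real.exp_le_one_iff.mpr (by nlinarith)
    nlinarith [hψ0 t, Real.exp_nonneg (-(s*t))]

lemma expPsi_full_eq (hψ0 : ∀ t, 0 ≤ ψ t) (hψint : Integrable ψ)
    (hψneg : ∀ t : ℝ, t < 0 → ψ t = 0) {s : ℝ} (hs : 0 < s) :
    (∫ t : ℝ, Real.exp (-(s*t)) * ψ t)
      = ∫ t in Ioi (0:ℝ), Real.exp (-(s*t)) * ψ t := by
  have h := integral_add_compl (measurableSet_Ioi (a := (0:ℝ)))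
    (expPsi_integrable' hψ0 hψint hψneg hs)
  rw [Set.compl_Ioi] at h
  have h0 : ∫ t in Iic (0:ℝ), Real.exp (-(s*t)) * ψ t = 0 := by
    have h0' : ∀ᵐ t : ℝ ∂(volume.restrict (Iic (0:ℝ))), Real.exp (-(s*t)) * ψ t = 0 := by
      have : ∀ᵐ t : ℝ, t ≠ 0 := by
        rw [MeasureTheory.ae_iff]
        simpa using measure_singleton (0:ℝ)
      filter_upwards [ae_restrict_of_ae this, ae_restrict_mem measurableSet_Iic] with t ht ht'
      rw [hψneg t (lt_of_le_of_ne ht' ht), mul_zero]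
    exact integral_eq_zero_of_ae h0'
  rw [h0, add_zero] at h
  linarith

lemma laplace_survival (hψ0 : ∀ t, 0 ≤ ψ t) (hψint : Integrable ψ)
    (hψ1 : (∫ t : ℝ, ψ t) = 1) (hψneg : ∀ t : ℝ, t < 0 → ψ t = 0)
    {s : ℝ} (hs : 0 < s) :
    (∫ t in Ioi (0:ℝ), Real.exp (-(s*t)) * (1 - ∫ r in (0:ℝ)..t, ψ r))
      = (1 - ∫ t in Ioi (0:ℝ), Real.exp (-(s*t)) * ψ t)/s := by
  set μt := volume.restrict (Ioi (0:ℝ)) with hμt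
  set E : ℝ → ℝ := fun t => Real.exp (-(s*t)) with hE
  have hEmeas : Measurable E := (Real.continuous_exp.comp (by continuity)).measurable
  set f : ℝ × ℝ → ℝ := ({p : ℝ × ℝ | p.1 < p.2}).indicator (fun p => E p.1 * ψ p.2) with hf
  have hset : MeasurableSet {p : ℝ × ℝ | p.1 < p.2} :=
    measurableSet_lt measurable_fst measurable_snd
  have hbound : Integrable (fun p : ℝ × ℝ => E p.1 * ψ p.2) (μt.prod μt) :=
    Integrable.mul_prod (exp_integrableOn_Ioi hs) hψint.restrict
  have hfaesm : AEStronglyMeasurable f (μt.prod μt) := by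
    refine AEStronglyMeasurable.indicator ?_ hset
    exact (hEmeas.aestronglyMeasurable.comp_fst).mul hψint.restrict.aestronglyMeasurable.comp_snd
  have hfint : Integrable f (μt.prod μt) := by
    refine hbound.mono' hfaesm (Filter.Eventually.of_forall fun p => ?_)
    refine (norm_indicator_le_norm_self _ p).trans_eq ?_
    rw [Real.norm_eq_abs, abs_mul, Real.abs_exp, abs_of_nonneg (hψ0 p.2)]
  have hLHS : (∫ t in Ioi (0:ℝ), E t * (1 - ∫ r in (0:ℝ)..t, ψ r))
      = ∫ t, (∫ r, f (t, r) ∂μt) ∂μt := by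
    refine integral_congr_ae ?_
    filter_upwards [ae_restrict_mem measurableSet_Ioi] with t ht
    have hfn : (fun r => f (t, r)) = (Ioi t).indicator (fun r => E t * ψ r) := by
      funext r
      by_cases h : t < r <;> simp [hf, Set.indicator_apply, h, Set.mem_Ioi]
    rw [hfn, MeasureTheory.integral_indicator measurableSet_Ioi,
      Measure.restrict_restrict measurableSet_Ioi,
      Set.inter_eq_left.mpr (Set.Ioi_subset_Ioi (le_of_lt ht)),
      MeasureTheory.integral_const_mul, surv_eq hψint hψ1 hψneg ht]
  have hswap : (∫ t, (∫ r, f (t, r) ∂μt) ∂μt) = ∫ r, (∫ t, f (t, r) ∂μt) ∂μt :=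
    integral_integral_swap (f := fun t r => f (t, r)) hfint
  have hRHS : (∫ r, (∫ t, f (t, r) ∂μt) ∂μt)
      = ∫ r in Ioi (0:ℝ), (1 - E r)/s * ψ r := by
    refine integral_congr_ae ?_
    filter_upwards [ae_restrict_mem measurableSet_Ioi] with r hr
    have hfn : (fun t => f (t, r)) = (Iio r).indicator (fun t => E t * ψ r) := by
      funext t
      by_cases h : t < r <;> simp [hf, Set.indicator_apply, h, Set.mem_Iio]
    rw [hfn, MeasureTheory.integral_indicator measurableSet_Iio,
      Measure.restrict_restrict measurableSet_Iio,
      Set.Iio_inter_Ioi, MeasureTheory.integral_mul_const, ← integral_Ioc_eq_integral_Ioo,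
      integral_exp_Ioc hs (le_of_lt hr)]
  have hfinal : (∫ r in Ioi (0:ℝ), (1 - E r)/s * ψ r)
      = (1 - ∫ t in Ioi (0:ℝ), E t * ψ t)/s := by
    have h1 : ∀ r : ℝ, (1 - E r)/s * ψ r = (ψ r - E r * ψ r)/s := fun r => by ring
    simp_rw [h1]
    rw [MeasureTheory.integral_div, integral_sub hψint.restrict (expPsi_integrable hψ0 hψint hs),
      psi_Ioi hψint hψ1 hψneg]
  rw [hLHS, hswap, hRHS, hfinal]

lemma integral_complex_ofReal {α : Type*} [MeasurableSpace α] {μ : Measure α} {f : α → ℝ} :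
    ∫ x, ((f x : ℝ) : ℂ) ∂μ = ((∫ x, f x ∂μ : ℝ) : ℂ) :=
  _root_.integral_ofReal

/-- Shear `(y, (x, τ)) ↦ (y, (x + y, τ))`. -/
def shearY : (ℝ × (ℝ × ℝ)) ≃ᵐ (ℝ × (ℝ × ℝ)) where
  toEquiv :=
  { toFun := fun q => (q.1, (q.2.1 + q.1, q.2.2))
    invFun := fun q => (q.1, (q.2.1 - q.1, q.2.2))
    left_inv := fun q => by simp
    right_inv := fun q => by simp }
  measurable_toFun := by
    exact measurable_fst.prodMk ((measurable_snd.fst.add measurable_fst).prodMk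
      measurable_snd.snd)
  measurable_invFun := by
    exact measurable_fst.prodMk ((measurable_snd.fst.sub measurable_fst).prodMk
      measurable_snd.snd)

/-- Shear `((x, τ), t) ↦ ((x, τ), t + τ)`. -/
def shearT : ((ℝ × ℝ) × ℝ) ≃ᵐ ((ℝ × ℝ) × ℝ) where
  toEquiv :=
  { toFun := fun q => (q.1, q.2 + q.1.2)
    invFun := fun q => (q.1, q.2 - q.1.2)
    left_inv := fun q => by simp
    right_inv := fun q => by simp }
  measurable_toFun := by
    exact measurable_fst.prodMk (measurable_snd.add measurable_fst.snd)
  measurable_invFun := by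
    exact measurable_fst.prodMk (measurable_snd.sub measurable_fst.snd)

/-- Permutation `((x, t), τ) ↦ ((x, τ), t)`. -/
def perm3 : ((ℝ × ℝ) × ℝ) ≃ᵐ ((ℝ × ℝ) × ℝ) where
  toEquiv :=
  { toFun := fun q => ((q.1.1, q.2), q.1.2)
    invFun := fun q => ((q.1.1, q.2), q.1.2)
    left_inv := fun q => by simp
    right_inv := fun q => by simp }
  measurable_toFun := by
    exact (measurable_fst.fst.prodMk measurable_snd).prodMk measurable_fst.snd
  measurable_invFun := by
    exact (measurable_fst.fst.prodMk measurable_snd).prodMk measurable_fst.snd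

lemma perm3_mp (μ ν κ : Measure ℝ) [SFinite μ] [SFinite ν] [SFinite κ] :
    MeasurePreserving perm3 ((μ.prod ν).prod κ) ((μ.prod κ).prod ν) := by
  have h1 := measurePreserving_prodAssoc μ ν κ
  have h2 : MeasurePreserving (Prod.map (id : ℝ → ℝ) Prod.swap)
      (μ.prod (ν.prod κ)) (μ.prod (κ.prod ν)) :=
    (MeasurePreserving.id μ).prod Measure.measurePreserving_swap
  have h3 := (measurePreserving_prodAssoc μ κ ν).symm MeasurableEquiv.prodAssoc
  have h := (h3.comp h2).comp h1
  convert h using 1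
  funext q; rfl

lemma shearY_mp (ρ : Measure (ℝ × ℝ)) [SFinite ρ]
    (hρ : ∀ y : ℝ, Measure.map (fun q : ℝ × ℝ => (q.1 + y, q.2)) ρ = ρ) :
    MeasurePreserving shearY ((volume : Measure ℝ).prod ρ) ((volume : Measure ℝ).prod ρ) := by
  have h := MeasurePreserving.skew_product (g := fun (y : ℝ) (q : ℝ × ℝ) => (q.1 + y, q.2))
    (MeasurePreserving.id (volume : Measure ℝ))
    ((measurable_snd.fst.add measurable_fst).prodMk measurable_snd.snd)
    (μc := ρ) (μd := ρ) (Filter.Eventually.of_forall hρ)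
  exact h

lemma shearT_mp (ρ : Measure (ℝ × ℝ)) [SFinite ρ] :
    MeasurePreserving shearT (ρ.prod (volume : Measure ℝ)) (ρ.prod (volume : Measure ℝ)) := by
  have h := MeasurePreserving.skew_product (g := fun (q : ℝ × ℝ) (t : ℝ) => t + q.2)
    (MeasurePreserving.id ρ) (measurable_snd.add measurable_fst.snd)
    (μc := (volume : Measure ℝ)) (μd := (volume : Measure ℝ))
    (Filter.Eventually.of_forall fun q => (measurePreserving_add_right volume q.2).map_eq)
  exact h

end MontrollWeissAux

open MontrollWeissAux

set_option maxHeartbeats 1000000 in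
/-- Montroll–Weiss equation. -/
theorem montroll_weiss
    (ψ φ : ℝ → ℝ) (hψ0 : ∀ t, 0 ≤ ψ t) (hφ0 : ∀ x, 0 ≤ φ x)
    (hψint : Integrable ψ) (hφint : Integrable φ)
    (hψ1 : (∫ t : ℝ, ψ t) = 1) (hφ1 : (∫ x : ℝ, φ x) = 1)
    (hψneg : ∀ t : ℝ, t < 0 → ψ t = 0)
    (u₀ : ℝ → ℝ) (hu₀ : Integrable u₀)
    (u : ℝ → ℝ → ℝ) (hmeas : Measurable (Function.uncurry u))
    (hint : ∀ s : ℝ, 0 < s →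
      IntegrableOn (fun p : ℝ × ℝ => Real.exp (-(s * p.2)) * |u p.1 p.2|)
        (Set.univ ×ˢ Set.Ioi 0))
    (hmaster : ∀ᵐ p : ℝ × ℝ, 0 ≤ p.2 →
      u p.1 p.2 = (1 - ∫ r in (0 : ℝ)..p.2, ψ r) * u₀ p.1 +
        ∫ τ in (0 : ℝ)..p.2, ψ (p.2 - τ) * ∫ y : ℝ, φ y * u (p.1 - y) τ) :
    ∀ s : ℝ, 0 < s → ∀ ξ : ℝ,
      (∫ t in Set.Ioi (0 : ℝ), ∫ x : ℝ,
          ((Real.exp (-(s * t)) : ℝ) : ℂ) *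
            Complex.exp (-(Complex.I * (ξ : ℂ) * (x : ℂ))) * ((u x t : ℝ) : ℂ)) *
        (1 - ((∫ t in Set.Ioi (0 : ℝ), Real.exp (-(s * t)) * ψ t : ℝ) : ℂ) *
          ∫ x : ℝ, Complex.exp (-(Complex.I * (ξ : ℂ) * (x : ℂ))) * ((φ x : ℝ) : ℂ)) =
      (((1 - ∫ t in Set.Ioi (0 : ℝ), Real.exp (-(s * t)) * ψ t) / s : ℝ) : ℂ) *
        ∫ x : ℝ, Complex.exp (-(Complex.I * (ξ : ℂ) * (x : ℂ))) * ((u₀ x : ℝ) : ℂ) := by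
  intro s hs ξ
  -- abbreviations; `set` rewrites the closed subterms of the goal
  set mE : ℝ → ℝ := fun t => Real.exp (-(s*t)) with hmE
  set F : ℝ → ℂ := fun x => Complex.exp (-(Complex.I * (ξ:ℂ) * (x:ℂ))) with hFdef
  set g : ℝ → ℝ → ℝ := fun x τ => ∫ y : ℝ, φ y * u (x - y) τ with hgdef
  set μt : Measure ℝ := volume.restrict (Set.Ioi (0:ℝ)) with hμt
  set ρ2 : Measure (ℝ × ℝ) := (volume : Measure ℝ).prod μt with hρ2def
  set Lψ : ℝ := ∫ t, Real.exp (-(s * t)) * ψ t ∂μt with hLψdef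
  set Fφ : ℂ := ∫ x : ℝ, Complex.exp (-(Complex.I * (ξ:ℂ) * (x:ℂ))) * ((φ x : ℝ) : ℂ)
    with hFφdef
  set FU0 : ℂ := ∫ x : ℝ, Complex.exp (-(Complex.I * (ξ:ℂ) * (x:ℂ))) * ((u₀ x : ℝ) : ℂ)
    with hFU0def
  set U : ℂ := ∫ t, (∫ x : ℝ, ((Real.exp (-(s * t)) : ℝ) : ℂ) *
      Complex.exp (-(Complex.I * (ξ:ℂ) * (x:ℂ))) * ((u x t : ℝ) : ℂ)) ∂μt with hUdef
  -- restated definitions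
  have hLψ' : Lψ = ∫ t, mE t * ψ t ∂μt := rfl
  have hFφ' : Fφ = ∫ x, F x * ((φ x : ℝ) : ℂ) := rfl
  have hFU0' : FU0 = ∫ x, F x * ((u₀ x : ℝ) : ℂ) := rfl
  have hU' : U = ∫ t, (∫ x, ((mE t : ℝ) : ℂ) * F x * ((u x t : ℝ) : ℂ)) ∂μt := rfl
  -- basic facts about F and mE
  have hFcont : Continuous F := by
    rw [hFdef]; fun_prop
  have hFmeas : Measurable F := hFcont.measurable
  have hFnorm : ∀ x : ℝ, ‖F x‖ = 1 := by
    intro x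
    rw [hFdef]
    simp only [Complex.norm_exp]
    norm_num [Complex.mul_re, Complex.I_re, Complex.I_im]
  have hFadd : ∀ x y : ℝ, F (x + y) = F x * F y := by
    intro x y
    rw [hFdef]
    simp only
    rw [← Complex.exp_add]
    congr 1
    push_cast
    ring
  have hEm : Measurable mE := (Real.continuous_exp.comp (by continuity)).measurable
  have hmEmul : ∀ a b : ℝ, mE (a + b) = mE a * mE b := by
    intro a b
    simp only [hmE]
    rw [← Real.exp_add]
    congr 1
    ring
  have hmEnn : ∀ t : ℝ, 0 ≤ mE t := fun t => Real.exp_nonneg _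
  -- measure identities
  have hρ2_eq : ρ2 = (volume : Measure (ℝ × ℝ)).restrict (Set.univ ×ˢ Set.Ioi 0) := by
    rw [hρ2def, hμt, Measure.volume_eq_prod, ← Measure.prod_restrict, Measure.restrict_univ]
  have hae_pos : ∀ᵐ p : ℝ × ℝ ∂ρ2, 0 < p.2 := by
    rw [hρ2_eq]
    filter_upwards [ae_restrict_mem (MeasurableSet.univ.prod measurableSet_Ioi)] with p hp
    exact hp.2
  have hmaster' : ∀ᵐ p : ℝ × ℝ ∂ρ2,
      u p.1 p.2 = (1 - ∫ r in (0:ℝ)..p.2, ψ r) * u₀ p.1 +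
        ∫ τ in (0:ℝ)..p.2, ψ (p.2 - τ) * g p.1 τ := by
    rw [hρ2_eq]
    filter_upwards [ae_restrict_of_ae hmaster,
      ae_restrict_mem (MeasurableSet.univ.prod measurableSet_Ioi)] with p h1 h2
    exact h1 (le_of_lt h2.2)
  -- basic integrability
  have hU1 : Integrable (fun p : ℝ × ℝ => mE p.2 * |u p.1 p.2|) ρ2 := by
    rw [hρ2_eq]; exact hint s hs
  have hKu_int : Integrable (fun p : ℝ × ℝ =>
      ((mE p.2 : ℝ) : ℂ) * F p.1 * ((u p.1 p.2 : ℝ) : ℂ)) ρ2 := by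
    refine hU1.mono' ?_ (Filter.Eventually.of_forall fun p => ?_)
    · exact (((Complex.measurable_ofReal.comp (hEm.comp measurable_snd)).mul
        (hFmeas.comp measurable_fst)).mul (Complex.measurable_ofReal.comp hmeas)
        ).aestronglyMeasurable
    · rw [norm_mul, norm_mul, hFnorm, Complex.norm_real, Complex.norm_real,
        Real.norm_eq_abs, Real.norm_eq_abs, abs_of_nonneg (hmEnn p.2), mul_one]
  -- the Fourier–Laplace transform as a product-measure integral
  have hU_eq : U = ∫ p, ((mE p.2 : ℝ) : ℂ) * F p.1 * ((u p.1 p.2 : ℝ) : ℂ) ∂ρ2 := by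
    rw [hU']
    rw [integral_integral_swap (f := fun t x =>
      ((mE t : ℝ) : ℂ) * F x * ((u x t : ℝ) : ℂ)) hKu_int.swap]
    exact integral_integral (f := fun x t =>
      ((mE t : ℝ) : ℂ) * F x * ((u x t : ℝ) : ℂ)) hKu_int
  -- survival probability facts
  set Ψ : ℝ → ℝ := fun t => 1 - ∫ r in (0:ℝ)..t, ψ r with hΨdef
  have hΨcont : Continuous Ψ :=
    continuous_const.sub (continuous_primitive (fun a b => hψint.intervalIntegrable) 0)
  have hΨ01 : ∀ t : ℝ, 0 < t → 0 ≤ Ψ t ∧ Ψ t ≤ 1 := by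
    intro t ht
    constructor
    · rw [hΨdef]
      simp only
      rw [surv_eq hψint hψ1 hψneg ht]
      exact setIntegral_nonneg measurableSet_Ioi fun r _ => hψ0 r
    · rw [hΨdef]
      simp only
      rw [intervalIntegral.integral_of_le ht.le]
      have : 0 ≤ ∫ r in Set.Ioc (0:ℝ) t, ψ r :=
        setIntegral_nonneg measurableSet_Ioc fun r _ => hψ0 r
      linarith
  -- Term 1 : the initial-datum term
  have hFu0_int : Integrable (fun x : ℝ => F x * ((u₀ x : ℝ) : ℂ)) volume := by
    refine hu₀.abs.mono' (hFmeas.aestronglyMeasurable.mul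
      (Complex.continuous_ofReal.comp_aestronglyMeasurable hu₀.aestronglyMeasurable))
      (Filter.Eventually.of_forall fun x => ?_)
    rw [norm_mul, hFnorm, one_mul, Complex.norm_real, Real.norm_eq_abs]
  have hEPsi_int : Integrable (fun t : ℝ => ((mE t * Ψ t : ℝ) : ℂ)) μt := by
    refine (exp_integrableOn_Ioi hs).mono' (Complex.continuous_ofReal.comp_aestronglyMeasurable
      ((hEm.aestronglyMeasurable).mul hΨcont.measurable.aestronglyMeasurable)) ?_
    filter_upwards [ae_restrict_mem measurableSet_Ioi] with t ht
    rw [Complex.norm_real, Real.norm_eq_abs, abs_mul, abs_of_nonneg (hmEnn t),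
      abs_of_nonneg (hΨ01 t ht).1]
    show mE t * Ψ t ≤ mE t
    nlinarith [(hΨ01 t ht).2, hmEnn t]
  have hT1int : Integrable (fun p : ℝ × ℝ =>
      (F p.1 * ((u₀ p.1 : ℝ) : ℂ)) * ((mE p.2 * Ψ p.2 : ℝ) : ℂ)) ρ2 :=
    Integrable.mul_prod hFu0_int hEPsi_int
  have hT1val : (∫ p, (F p.1 * ((u₀ p.1 : ℝ) : ℂ)) * ((mE p.2 * Ψ p.2 : ℝ) : ℂ) ∂ρ2)
      = FU0 * (((1 - Lψ)/s : ℝ) : ℂ) := by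
    rw [hρ2def, MeasureTheory.integral_prod_mul (f := fun x => F x * ((u₀ x : ℝ) : ℂ))
      (g := fun t => ((mE t * Ψ t : ℝ) : ℂ)), MontrollWeissAux.integral_complex_ofReal, hFU0']
    congr 1
    exact congrArg Complex.ofReal (laplace_survival hψ0 hψint hψ1 hψneg hs)
  -- the memory term
  set C : ℝ × ℝ → ℝ := fun p => ∫ τ in (0:ℝ)..p.2, ψ (p.2 - τ) * g p.1 τ with hCdef
  have hsplit : (∫ p, ((mE p.2 : ℝ) : ℂ) * F p.1 * ((u p.1 p.2 : ℝ) : ℂ) ∂ρ2)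
      = (∫ p, (F p.1 * ((u₀ p.1 : ℝ) : ℂ)) * ((mE p.2 * Ψ p.2 : ℝ) : ℂ) ∂ρ2)
        + ∫ p, ((mE p.2 : ℝ) : ℂ) * F p.1 * ((C p : ℝ) : ℂ) ∂ρ2 := by
    have h1 : (∫ p, ((mE p.2 : ℝ) : ℂ) * F p.1 * ((u p.1 p.2 : ℝ) : ℂ) ∂ρ2)
        = ∫ p, ((F p.1 * ((u₀ p.1 : ℝ) : ℂ)) * ((mE p.2 * Ψ p.2 : ℝ) : ℂ)
            + (((mE p.2 : ℝ) : ℂ) * F p.1 * ((u p.1 p.2 : ℝ) : ℂ)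
              - (F p.1 * ((u₀ p.1 : ℝ) : ℂ)) * ((mE p.2 * Ψ p.2 : ℝ) : ℂ))) ∂ρ2 := by
      congr 1
      funext p
      ring
    have hdiff : Integrable (fun p : ℝ × ℝ =>
        ((mE p.2 : ℝ) : ℂ) * F p.1 * ((u p.1 p.2 : ℝ) : ℂ)
          - (F p.1 * ((u₀ p.1 : ℝ) : ℂ)) * ((mE p.2 * Ψ p.2 : ℝ) : ℂ)) ρ2 :=
      hKu_int.sub hT1int
    rw [h1, integral_add hT1int hdiff]
    congr 1
    refine integral_congr_ae ?_
    filter_upwards [hmaster'] with p hp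
    rw [hp]
    show ((mE p.2 : ℝ) : ℂ) * F p.1 * ((Ψ p.2 * u₀ p.1 + C p : ℝ) : ℂ)
        - (F p.1 * ((u₀ p.1 : ℝ) : ℂ)) * ((mE p.2 * Ψ p.2 : ℝ) : ℂ)
      = ((mE p.2 : ℝ) : ℂ) * F p.1 * ((C p : ℝ) : ℂ)
    push_cast
    ring
  -- ### Fubini B : the convolution step
  have htransY : ∀ y : ℝ, Measure.map (fun q : ℝ × ℝ => (q.1 + y, q.2)) ρ2 = ρ2 := by
    intro y
    exact ((measurePreserving_add_right (volume : Measure ℝ) y).prod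
      (MeasurePreserving.id μt)).map_eq
  set B : (ℝ × ℝ) × ℝ → ℂ := fun q =>
    ((mE q.1.2 : ℝ) : ℂ) * F q.1.1 * ((φ q.2 * u (q.1.1 - q.2) q.1.2 : ℝ) : ℂ) with hBdef
  have hFφ_int : Integrable (fun y : ℝ => F y * ((φ y : ℝ) : ℂ)) volume := by
    refine hφint.abs.mono' (hFmeas.aestronglyMeasurable.mul
      (Complex.continuous_ofReal.comp_aestronglyMeasurable hφint.aestronglyMeasurable))
      (Filter.Eventually.of_forall fun x => ?_)
    rw [norm_mul, hFnorm, one_mul, Complex.norm_real, Real.norm_eq_abs]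
  have hprodB : Integrable (fun z : ℝ × (ℝ × ℝ) =>
      (F z.1 * ((φ z.1 : ℝ) : ℂ)) *
        (((mE z.2.2 : ℝ) : ℂ) * F z.2.1 * ((u z.2.1 z.2.2 : ℝ) : ℂ)))
      ((volume : Measure ℝ).prod ρ2) :=
    Integrable.mul_prod hFφ_int hKu_int
  have hcompB : ((fun z : ℝ × (ℝ × ℝ) => B (Prod.swap z)) ∘ ⇑shearY)
      = fun z : ℝ × (ℝ × ℝ) => (F z.1 * ((φ z.1 : ℝ) : ℂ)) *
          (((mE z.2.2 : ℝ) : ℂ) * F z.2.1 * ((u z.2.1 z.2.2 : ℝ) : ℂ)) := by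
    funext z
    show B ((z.2.1 + z.1, z.2.2), z.1) = _
    rw [hBdef]
    simp only
    rw [add_sub_cancel_right, hFadd]
    push_cast
    ring
  have hswapB_int : Integrable (fun z : ℝ × (ℝ × ℝ) => B (Prod.swap z))
      ((volume : Measure ℝ).prod ρ2) := by
    refine ((shearY_mp ρ2 htransY).integrable_comp_emb shearY.measurableEmbedding).mp ?_
    rw [hcompB]
    exact hprodB
  have hB_int : Integrable B (ρ2.prod (volume : Measure ℝ)) := by
    have h := hswapB_int.swap
    exact h
  have hBy : ∀ p : ℝ × ℝ,
      (∫ y, B (p, y)) = ((mE p.2 : ℝ) : ℂ) * F p.1 * ((g p.1 p.2 : ℝ) : ℂ) := by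
    intro p
    rw [hBdef]
    simp only
    rw [MeasureTheory.integral_const_mul, MontrollWeissAux.integral_complex_ofReal]
  have hG2_int : Integrable (fun p : ℝ × ℝ =>
      ((mE p.2 : ℝ) : ℂ) * F p.1 * ((g p.1 p.2 : ℝ) : ℂ)) ρ2 := by
    have h := hB_int.integral_prod_left
    exact h.congr (Filter.Eventually.of_forall hBy)
  have hSB : (∫ p, ((mE p.2 : ℝ) : ℂ) * F p.1 * ((g p.1 p.2 : ℝ) : ℂ) ∂ρ2)
      = Fφ * ∫ p, ((mE p.2 : ℝ) : ℂ) * F p.1 * ((u p.1 p.2 : ℝ) : ℂ) ∂ρ2 := by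
    calc (∫ p, ((mE p.2 : ℝ) : ℂ) * F p.1 * ((g p.1 p.2 : ℝ) : ℂ) ∂ρ2)
        = ∫ p, (∫ y, B (p, y)) ∂ρ2 :=
          integral_congr_ae (Filter.Eventually.of_forall fun p => (hBy p).symm)
      _ = ∫ z, B z ∂(ρ2.prod (volume : Measure ℝ)) :=
          (MeasureTheory.integral_prod B hB_int).symm
      _ = ∫ z, B (Prod.swap z) ∂((volume : Measure ℝ).prod ρ2) :=
          (MeasureTheory.integral_prod_swap B).symm
      _ = ∫ z, ((fun z : ℝ × (ℝ × ℝ) => B (Prod.swap z)) ∘ ⇑shearY) z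
            ∂((volume : Measure ℝ).prod ρ2) :=
          ((shearY_mp ρ2 htransY).integral_comp shearY.measurableEmbedding _).symm
      _ = ∫ z, (F z.1 * ((φ z.1 : ℝ) : ℂ)) *
            (((mE z.2.2 : ℝ) : ℂ) * F z.2.1 * ((u z.2.1 z.2.2 : ℝ) : ℂ))
            ∂((volume : Measure ℝ).prod ρ2) := by rw [hcompB]
      _ = (∫ y, F y * ((φ y : ℝ) : ℂ)) *
            ∫ p, ((mE p.2 : ℝ) : ℂ) * F p.1 * ((u p.1 p.2 : ℝ) : ℂ) ∂ρ2 :=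
          MeasureTheory.integral_prod_mul (f := fun y : ℝ => F y * ((φ y : ℝ) : ℂ))
            (g := fun p : ℝ × ℝ => ((mE p.2 : ℝ) : ℂ) * F p.1 * ((u p.1 p.2 : ℝ) : ℂ))
      _ = Fφ * ∫ p, ((mE p.2 : ℝ) : ℂ) * F p.1 * ((u p.1 p.2 : ℝ) : ℂ) ∂ρ2 := by
          rw [hFφ']
  -- ### Fubini A : the time-convolution step
  have hEψC_int : Integrable (fun r : ℝ => ((mE r * ψ r : ℝ) : ℂ)) volume := by
    refine (expPsi_integrable' hψ0 hψint hψneg hs).mono'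
      (Complex.continuous_ofReal.comp_aestronglyMeasurable
        (hEm.aestronglyMeasurable.mul hψint.aestronglyMeasurable))
      (Filter.Eventually.of_forall fun r => ?_)
    rw [Complex.norm_real, Real.norm_eq_abs,
      abs_of_nonneg (mul_nonneg (hmEnn r) (hψ0 r))]
  set W : ((ℝ × ℝ) × ℝ) → ℂ := fun q =>
    ((mE q.2 : ℝ) : ℂ) * F q.1.1 * ((ψ (q.2 - q.1.2) * g q.1.1 q.1.2 : ℝ) : ℂ) with hWdef
  have hcompW : (W ∘ ⇑shearT) = fun q : (ℝ × ℝ) × ℝ =>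
      (((mE q.1.2 : ℝ) : ℂ) * F q.1.1 * ((g q.1.1 q.1.2 : ℝ) : ℂ))
        * ((mE q.2 * ψ q.2 : ℝ) : ℂ) := by
    funext q
    show W (q.1, q.2 + q.1.2) = _
    rw [hWdef]
    simp only
    rw [add_sub_cancel_right, hmEmul]
    push_cast
    ring
  have hW_full_int : Integrable W (ρ2.prod (volume : Measure ℝ)) := by
    refine ((shearT_mp ρ2).integrable_comp_emb shearT.measurableEmbedding).mp ?_
    rw [hcompW]
    exact Integrable.mul_prod hG2_int hEψC_int
  have hρ2μt : ρ2.prod μt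
      = (ρ2.prod (volume : Measure ℝ)).restrict (Set.univ ×ˢ Set.Ioi 0) := by
    rw [hμt, ← Measure.prod_restrict, Measure.restrict_univ]
  have hW_int : Integrable W (ρ2.prod μt) := by
    rw [hρ2μt]; exact hW_full_int.integrableOn
  have hWp_int : Integrable (W ∘ ⇑perm3) (ρ2.prod μt) :=
    ((perm3_mp volume μt μt).integrable_comp_emb perm3.measurableEmbedding).mpr hW_int
  have hCpt : ∀ p : ℝ × ℝ, 0 < p.2 →
      ((mE p.2 : ℝ) : ℂ) * F p.1 * ((C p : ℝ) : ℂ) = ∫ τ, (W ∘ ⇑perm3) (p, τ) ∂μt := by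
    intro p hp
    have hCval : C p = ∫ τ, ψ (p.2 - τ) * g p.1 τ ∂μt := by
      rw [hCdef]
      simp only
      rw [intervalIntegral.integral_of_le hp.le]
      symm
      calc (∫ τ, ψ (p.2 - τ) * g p.1 τ ∂μt)
          = ∫ τ, (Set.Ioc (0:ℝ) p.2).indicator (fun τ => ψ (p.2 - τ) * g p.1 τ) τ ∂μt := by
            refine integral_congr_ae ?_
            have hne : ∀ᵐ τ : ℝ ∂μt, τ ≠ p.2 := by
              refine ae_restrict_of_ae ?_
              rw [MeasureTheory.ae_iff]
              simpa using measure_singleton p.2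
            filter_upwards [hne, ae_restrict_mem measurableSet_Ioi] with τ hτne hτ
            by_cases hle : τ ≤ p.2
            · rw [Set.indicator_of_mem (Set.mem_Ioc.mpr ⟨hτ, hle⟩)]
            · rw [Set.indicator_of_notMem (by simp [Set.mem_Ioc, hle]),
                hψneg _ (by linarith [lt_of_not_ge hle]), zero_mul]
        _ = ∫ τ in Set.Ioc (0:ℝ) p.2, ψ (p.2 - τ) * g p.1 τ ∂μt :=
            MeasureTheory.integral_indicator measurableSet_Ioc
        _ = ∫ τ in Set.Ioc (0:ℝ) p.2, ψ (p.2 - τ) * g p.1 τ := by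
            rw [hμt, Measure.restrict_restrict measurableSet_Ioc,
              Set.inter_eq_left.mpr Set.Ioc_subset_Ioi_self]
    rw [hCval]
    have hptw : ∀ τ : ℝ, (W ∘ ⇑perm3) (p, τ)
        = (((mE p.2 : ℝ) : ℂ) * F p.1) * ((ψ (p.2 - τ) * g p.1 τ : ℝ) : ℂ) := by
      intro τ
      show W ((p.1, τ), p.2) = _
      rw [hWdef]
    simp_rw [hptw]
    rw [MeasureTheory.integral_const_mul, MontrollWeissAux.integral_complex_ofReal]
  have hinner : ∀ x τ : ℝ, 0 < τ →
      (∫ t, W ((x, τ), t) ∂μt)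
        = ((Lψ : ℝ) : ℂ) * (((mE τ : ℝ) : ℂ) * F x * ((g x τ : ℝ) : ℂ)) := by
    intro x τ hτ
    have h1 : ∀ t : ℝ, W ((x, τ), t)
        = (F x * ((g x τ : ℝ) : ℂ)) * ((mE t * ψ (t - τ) : ℝ) : ℂ) := by
      intro t
      rw [hWdef]
      push_cast
      ring
    simp_rw [h1]
    rw [MeasureTheory.integral_const_mul, MontrollWeissAux.integral_complex_ofReal]
    have e1 : (∫ t, mE t * ψ (t - τ) ∂μt) = ∫ t, mE t * ψ (t - τ) := by
      apply setIntegral_eq_integral_of_forall_compl_eq_zero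
      intro t ht
      rw [hψneg _ (by simp only [Set.mem_Ioi, not_lt] at ht; linarith), mul_zero]
    have e2 : (∫ t, mE t * ψ (t - τ)) = ∫ r, mE (r + τ) * ψ r := by
      have h := integral_sub_right_eq_self (μ := (volume : Measure ℝ))
        (fun r => mE (r + τ) * ψ r) τ
      simp only [sub_add_cancel] at h
      exact h
    have e3 : (∫ r, mE (r + τ) * ψ r) = mE τ * ∫ r, mE r * ψ r := by
      simp_rw [show ∀ r : ℝ, mE (r + τ) * ψ r = mE τ * (mE r * ψ r) from
        fun r => by rw [hmEmul]; ring]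
      exact MeasureTheory.integral_const_mul _ _
    have e4 : (∫ r, mE r * ψ r) = Lψ := by
      rw [hLψ', hμt]
      exact expPsi_full_eq hψ0 hψint hψneg hs
    rw [e1, e2, e3, e4]
    push_cast
    ring
  have hT2 : (∫ p, ((mE p.2 : ℝ) : ℂ) * F p.1 * ((C p : ℝ) : ℂ) ∂ρ2)
      = ((Lψ : ℝ) : ℂ) *
          (Fφ * ∫ p, ((mE p.2 : ℝ) : ℂ) * F p.1 * ((u p.1 p.2 : ℝ) : ℂ) ∂ρ2) := by
    calc (∫ p, ((mE p.2 : ℝ) : ℂ) * F p.1 * ((C p : ℝ) : ℂ) ∂ρ2)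
        = ∫ p, (∫ τ, (W ∘ ⇑perm3) (p, τ) ∂μt) ∂ρ2 := by
          refine integral_congr_ae ?_
          filter_upwards [hae_pos] with p hp
          exact hCpt p hp
      _ = ∫ q, (W ∘ ⇑perm3) q ∂(ρ2.prod μt) :=
          (MeasureTheory.integral_prod _ hWp_int).symm
      _ = ∫ q, W q ∂(ρ2.prod μt) :=
          (perm3_mp volume μt μt).integral_comp perm3.measurableEmbedding W
      _ = ∫ p, (∫ t, W (p, t) ∂μt) ∂ρ2 := MeasureTheory.integral_prod _ hW_int
      _ = ∫ p, ((Lψ : ℝ) : ℂ) * (((mE p.2 : ℝ) : ℂ) * F p.1 * ((g p.1 p.2 : ℝ) : ℂ)) ∂ρ2 := by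
          refine integral_congr_ae ?_
          filter_upwards [hae_pos] with p hp
          exact hinner p.1 p.2 hp
      _ = ((Lψ : ℝ) : ℂ) * ∫ p, ((mE p.2 : ℝ) : ℂ) * F p.1 * ((g p.1 p.2 : ℝ) : ℂ) ∂ρ2 :=
          MeasureTheory.integral_const_mul _ _
      _ = ((Lψ : ℝ) : ℂ) *
            (Fφ * ∫ p, ((mE p.2 : ℝ) : ℂ) * F p.1 * ((u p.1 p.2 : ℝ) : ℂ) ∂ρ2) := by
          rw [hSB]
  -- ### Assembly
  rw [hT1val, hT2, ← hU_eq] at hsplit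
  linear_combination hsplit
end
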